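/- Let μ be a Borel probability measure on ℝ with finite second moment, let x ∈ ℝ, and let ρ be a Borel probability measure on ℝ such that 1/G_ρ(z) = 1/G_μ(z) − x for all z in the upper half-plane ℂ⁺. Then ρ has finite second moment, the mean of ρ equals the mean of μ plus x, the variance of ρ equals the variance of μ, and the second moment of ρ equals m₂(μ) + 2x·m(μ) + x², where m(μ) and m₂(μ) denote the mean and second moment of μ. -/

import Mathlib

open MeasureTheory ProbabilityTheory Complex
open Filter Topology

lemma aux_ne (y : ℝ) (hy : 0 < y) (t : ℝ) : ((y:ℂ)*I - (t:ℂ)) ≠ 0 := by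
  intro hz
  have h1 : ((y:ℂ)*I - (t:ℂ)).im = 0 := by rw [hz]; simp
  simp at h1
  exact hy.ne' h1

lemma aux_norm (y : ℝ) (hy : 0 < y) (t : ℝ) : ‖((y:ℂ)*I - (t:ℂ))⁻¹‖ ≤ y⁻¹ := by
  rw [norm_inv]
  apply inv_anti₀ hy
  calc y = |((y:ℂ)*I - (t:ℂ)).im| := by simp [abs_of_pos hy]
  _ ≤ ‖((y:ℂ)*I - (t:ℂ))‖ := Complex.abs_im_le_norm _

lemma cont_aux (y : ℝ) (hy : 0 < y) : Continuous (fun t : ℝ => ((y:ℂ)*I - (t:ℂ))⁻¹) :=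
  Continuous.inv₀ (by continuity) (fun t => aux_ne y hy t)

lemma int_aux (ν : Measure ℝ) [IsProbabilityMeasure ν] (y : ℝ) (hy : 0 < y) :
    Integrable (fun t : ℝ => ((y:ℂ)*I - (t:ℂ))⁻¹) ν :=
  ⟨(cont_aux y hy).aestronglyMeasurable,
   HasFiniteIntegral.of_bounded (C := y⁻¹) (Eventually.of_forall (aux_norm y hy))⟩

noncomputable def Gc (ν : Measure ℝ) (y : ℝ) : ℂ := ∫ t : ℝ, ((y:ℂ)*I - (t:ℂ))⁻¹ ∂ν
noncomputable def Hc (ν : Measure ℝ) (y : ℝ) : ℂ := ((y:ℂ)*I) * Gc ν y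
noncomputable def Kc (ν : Measure ℝ) (y : ℝ) : ℂ :=
  ∫ t : ℝ, (t:ℂ)^2 * (((y:ℂ)*I) * ((y:ℂ)*I - (t:ℂ))⁻¹) ∂ν

-- integrable t and (t:ℂ)
lemma int_id (ν : Measure ℝ) [IsProbabilityMeasure ν]
    (h2 : Integrable (fun t : ℝ => t ^ 2) ν) : Integrable (fun t : ℝ => t) ν := by
  have hg : Integrable (fun t : ℝ => (1 + t^2)/2) ν := ((integrable_const 1).add h2).div_const 2
  refine hg.mono' measurable_id.aestronglyMeasurable (Eventually.of_forall fun t => ?_)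
  have : ‖t‖ = |t| := rfl
  rw [this]
  nlinarith [sq_nonneg (|t| - 1), abs_nonneg t, _root_.sq_abs t]

-- K integrable integrand
lemma int_K (ν : Measure ℝ) [IsProbabilityMeasure ν]
    (h2 : Integrable (fun t : ℝ => t ^ 2) ν) (y : ℝ) (hy : 0 < y) :
    Integrable (fun t : ℝ => (t:ℂ)^2 * (((y:ℂ)*I) * ((y:ℂ)*I - (t:ℂ))⁻¹)) ν := by
  have hm : AEStronglyMeasurable (fun t : ℝ => (t:ℂ)^2 * (((y:ℂ)*I) * ((y:ℂ)*I - (t:ℂ))⁻¹)) ν := by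
    refine Continuous.aestronglyMeasurable ?_
    exact Continuous.mul (by continuity) (continuous_const.mul (cont_aux y hy))
  refine h2.mono' hm (Eventually.of_forall fun t => ?_)
  have h1 := aux_norm y hy t
  have h0 : ‖((y:ℂ)*I - (t:ℂ))⁻¹‖ ≥ 0 := norm_nonneg _
  have heq : ‖(t:ℂ)^2 * (((y:ℂ)*I) * ((y:ℂ)*I - (t:ℂ))⁻¹)‖
      = t^2 * (y * ‖((y:ℂ)*I - (t:ℂ))⁻¹‖) := by
    rw [norm_mul, norm_mul]
    simp [abs_of_pos hy, sq_abs]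
  rw [heq]
  have : y * ‖((y:ℂ)*I - (t:ℂ))⁻¹‖ ≤ 1 := by
    calc y * ‖((y:ℂ)*I - (t:ℂ))⁻¹‖ ≤ y * y⁻¹ := by nlinarith
    _ = 1 := mul_inv_cancel₀ hy.ne'
  nlinarith [sq_nonneg t]



lemma winv_tendsto : Tendsto (fun y : ℝ => ((y:ℂ)*I)⁻¹) atTop (𝓝 0) := by
  rw [tendsto_zero_iff_norm_tendsto_zero]
  have : ∀ᶠ y : ℝ in atTop, ‖((y:ℂ)*I)⁻¹‖ = y⁻¹ := by
    filter_upwards [eventually_gt_atTop 0] with y hy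
    simp [norm_inv, abs_of_pos hy]
  exact Tendsto.congr' (this.mono fun y hy => hy.symm) tendsto_inv_atTop_zero

lemma frac_tendsto (t : ℝ) :
    Tendsto (fun y : ℝ => ((y:ℂ)*I) * ((y:ℂ)*I - (t:ℂ))⁻¹) atTop (𝓝 1) := by
  have h1 : ∀ᶠ y : ℝ in atTop, ((y:ℂ)*I) * ((y:ℂ)*I - (t:ℂ))⁻¹
      = (1 - (t:ℂ) * ((y:ℂ)*I)⁻¹)⁻¹ := by
    filter_upwards [eventually_gt_atTop 0] with y hy
    have hne := aux_ne y hy t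
    have hw : ((y:ℂ)*I) ≠ 0 := by
      intro hz; exact aux_ne y hy 0 (by simpa using hz)
    have hy0 : (y:ℂ) ≠ 0 := by exact_mod_cast hy.ne'
    field_simp
  have h2 : Tendsto (fun y : ℝ => (1 - (t:ℂ) * ((y:ℂ)*I)⁻¹)⁻¹) atTop (𝓝 1) := by
    have : Tendsto (fun y : ℝ => 1 - (t:ℂ) * ((y:ℂ)*I)⁻¹) atTop (𝓝 1) := by
      have := (winv_tendsto.const_mul (t:ℂ)).const_sub 1
      simpa using this
    simpa using this.inv₀ one_ne_zero
  exact Tendsto.congr' (h1.mono fun y hy => hy.symm) h2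

lemma w_ne (y : ℝ) (hy : 0 < y) : ((y:ℂ)*I) ≠ 0 := by
  intro hz; exact aux_ne y hy 0 (by simpa using hz)

lemma K_tendsto (ν : Measure ℝ) [IsProbabilityMeasure ν]
    (h2 : Integrable (fun t : ℝ => t ^ 2) ν) :
    Tendsto (fun y => Kc ν y) atTop (𝓝 ((∫ t : ℝ, t^2 ∂ν : ℝ) : ℂ)) := by
  have key : Tendsto (fun y => Kc ν y) atTop (𝓝 (∫ t : ℝ, ((t:ℂ))^2 ∂ν)) := by
    refine tendsto_integral_filter_of_dominated_convergence (fun t => t^2) ?_ ?_ h2 ?_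
    · filter_upwards [eventually_gt_atTop 0] with y hy
      exact (int_K ν h2 y hy).1
    · filter_upwards [eventually_gt_atTop 0] with y hy
      refine Eventually.of_forall fun t => ?_
      have h1 := aux_norm y hy t
      have h0 : (0:ℝ) ≤ ‖((y:ℂ)*I - (t:ℂ))⁻¹‖ := norm_nonneg _
      have heq : ‖(t:ℂ)^2 * (((y:ℂ)*I) * ((y:ℂ)*I - (t:ℂ))⁻¹)‖
          = t^2 * (y * ‖((y:ℂ)*I - (t:ℂ))⁻¹‖) := by
        rw [norm_mul, norm_mul]
        simp [abs_of_pos hy, _root_.sq_abs]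
      rw [heq]
      have : y * ‖((y:ℂ)*I - (t:ℂ))⁻¹‖ ≤ 1 := by
        calc y * ‖((y:ℂ)*I - (t:ℂ))⁻¹‖ ≤ y * y⁻¹ := by nlinarith
        _ = 1 := mul_inv_cancel₀ hy.ne'
      nlinarith [sq_nonneg t]
    · refine Eventually.of_forall fun t => ?_
      simpa using (frac_tendsto t).const_mul ((t:ℂ)^2)
  have : (∫ t : ℝ, ((t:ℂ))^2 ∂ν) = ((∫ t : ℝ, t^2 ∂ν : ℝ) : ℂ) := by
    have h1 : (∫ t : ℝ, ((t:ℂ))^2 ∂ν) = ∫ t : ℝ, ((t^2 : ℝ) : ℂ) ∂ν :=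
      integral_congr_ae (Eventually.of_forall fun t => by push_cast; ring)
    rw [h1]; exact integral_ofReal (𝕜 := ℂ)
  rwa [this] at key

lemma int_K2 (ν : Measure ℝ) [IsProbabilityMeasure ν]
    (h2 : Integrable (fun t : ℝ => t ^ 2) ν) (y : ℝ) (hy : 0 < y) :
    Integrable (fun t : ℝ => (t:ℂ)^2 * ((y:ℂ)*I - (t:ℂ))⁻¹) ν := by
  have hm : AEStronglyMeasurable (fun t : ℝ => (t:ℂ)^2 * ((y:ℂ)*I - (t:ℂ))⁻¹) ν :=
    (Continuous.mul (by continuity) (cont_aux y hy)).aestronglyMeasurable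
  refine (h2.const_mul y⁻¹).mono' hm (Eventually.of_forall fun t => ?_)
  have h1 := aux_norm y hy t
  have heq : ‖(t:ℂ)^2 * ((y:ℂ)*I - (t:ℂ))⁻¹‖ = t^2 * ‖((y:ℂ)*I - (t:ℂ))⁻¹‖ := by
    rw [norm_mul]; simp [_root_.sq_abs]
  rw [heq]
  nlinarith [sq_nonneg t, norm_nonneg (((y:ℂ)*I - (t:ℂ))⁻¹)]

lemma int_coe (ν : Measure ℝ) [IsProbabilityMeasure ν]
    (h2 : Integrable (fun t : ℝ => t ^ 2) ν) :
    Integrable (fun t : ℝ => (t:ℂ)) ν := (int_id ν h2).ofReal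

lemma H_expand (ν : Measure ℝ) [IsProbabilityMeasure ν]
    (h2 : Integrable (fun t : ℝ => t ^ 2) ν) (y : ℝ) (hy : 0 < y) :
    ((y:ℂ)*I)^2 * (Hc ν y - 1 - ((∫ t : ℝ, t ∂ν : ℝ) : ℂ) * (((y:ℂ)*I)⁻¹)) = Kc ν y := by
  set w : ℂ := (y:ℂ)*I with hw
  have hwne : w ≠ 0 := w_ne y hy
  have h1 : Hc ν y - 1 = ∫ t : ℝ, (t:ℂ) * (w - (t:ℂ))⁻¹ ∂ν := by
    have e1 : Hc ν y = ∫ t : ℝ, w * (w - (t:ℂ))⁻¹ ∂ν := (integral_const_mul w _).symm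
    have e2 : (1:ℂ) = ∫ _ : ℝ, (1:ℂ) ∂ν := by simp
    rw [e1, e2, ← integral_sub ((int_aux ν y hy).const_mul w) (integrable_const 1)]
    refine integral_congr_ae (Eventually.of_forall fun t => ?_)
    have hne : w - (t:ℂ) ≠ 0 := aux_ne y hy t
    simp only [← hw]
    field_simp
    ring
  have h2' : w * (Hc ν y - 1)
      = ((∫ t : ℝ, t ∂ν : ℝ) : ℂ) + ∫ t : ℝ, (t:ℂ)^2 * (w - (t:ℂ))⁻¹ ∂ν := by
    rw [h1, ← integral_const_mul]
    have e3 : ∫ t : ℝ, w * ((t:ℂ) * (w - (t:ℂ))⁻¹) ∂ν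
        = ∫ t : ℝ, ((t:ℂ) + (t:ℂ)^2 * (w - (t:ℂ))⁻¹) ∂ν := by
      refine integral_congr_ae (Eventually.of_forall fun t => ?_)
      have hne : w - (t:ℂ) ≠ 0 := aux_ne y hy t
      field_simp
      ring
    rw [e3, integral_add (int_coe ν h2) (int_K2 ν h2 y hy)]
    congr 1
    exact integral_ofReal (𝕜 := ℂ)
  have h3 : w * ∫ t : ℝ, (t:ℂ)^2 * (w - (t:ℂ))⁻¹ ∂ν = Kc ν y := by
    rw [← integral_const_mul]
    refine integral_congr_ae (Eventually.of_forall fun t => ?_)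
    ring
  have : ((y:ℂ)*I)^2 * (Hc ν y - 1 - ((∫ t : ℝ, t ∂ν : ℝ) : ℂ) * (((y:ℂ)*I)⁻¹))
      = w * (w * (Hc ν y - 1) - ((∫ t : ℝ, t ∂ν : ℝ) : ℂ)) := by
    rw [← hw]
    field_simp
  rw [this, h2']
  rw [add_sub_cancel_left, h3]

lemma int_inv_im (ν : Measure ℝ) [IsProbabilityMeasure ν] (y : ℝ) (hy : 0 < y) :
    (Gc ν y).im = ∫ t : ℝ, -y / (t^2 + y^2) ∂ν := by
  have hbase : (Gc ν y).im = ∫ t : ℝ, (((y:ℂ)*I - (t:ℂ))⁻¹).im ∂ν := by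
    simpa [Gc] using (integral_im (𝕜 := ℂ) (int_aux ν y hy)).symm
  rw [hbase]
  refine integral_congr_ae (Eventually.of_forall fun t => ?_)
  have : ((y:ℂ)*I - (t:ℂ))⁻¹.im = -y / (t^2 + y^2) := by
    rw [Complex.inv_im]
    have h1 : ((y:ℂ)*I - (t:ℂ)).im = y := by simp
    have h2 : Complex.normSq ((y:ℂ)*I - (t:ℂ)) = t^2 + y^2 := by
      simp [Complex.normSq_apply]
      ring
    rw [h1, h2]
  exact this

lemma G_ne (ν : Measure ℝ) [IsProbabilityMeasure ν] (y : ℝ) (hy : 0 < y) :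
    Gc ν y ≠ 0 := by
  intro hz
  have him : (Gc ν y).im = 0 := by rw [hz]; rfl
  rw [int_inv_im ν y hy] at him
  have hpos : 0 < ∫ t : ℝ, y / (t^2 + y^2) ∂ν := by
    have hint : Integrable (fun t : ℝ => y / (t^2 + y^2)) ν := by
      refine (integrable_const y⁻¹).mono' ?_ (Eventually.of_forall fun t => ?_)
      · exact (Continuous.div continuous_const (by continuity)
          (fun t => by positivity)).aestronglyMeasurable
      · rw [Real.norm_eq_abs, abs_of_pos (by positivity)]
        rw [div_le_iff₀ (by positivity)]
        rw [inv_mul_eq_div, le_div_iff₀ hy]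
        nlinarith [sq_nonneg t]
    rw [integral_pos_iff_support_of_nonneg_ae
      (Eventually.of_forall fun t => by positivity) hint]
    have : Function.support (fun t : ℝ => y / (t^2 + y^2)) = Set.univ := by
      ext t
      simp only [Function.support, Set.mem_setOf_eq, Set.mem_univ, iff_true]
      exact (by positivity : (0:ℝ) < y / (t^2 + y^2)).ne'
    rw [this]
    simp
  have : (∫ t : ℝ, -y / (t^2 + y^2) ∂ν) = -(∫ t : ℝ, y / (t^2 + y^2) ∂ν) := by
    rw [← integral_neg]
    refine integral_congr_ae (Eventually.of_forall fun t => by ring)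
  rw [this] at him
  linarith

lemma E_formula (μ ρ : Measure ℝ) [IsProbabilityMeasure μ] [IsProbabilityMeasure ρ]
    (hμ2 : Integrable (fun t : ℝ => t ^ 2) μ) (x : ℝ)
    (h : ∀ z : ℂ, 0 < z.im →
      (∫ t : ℝ, (z - (t : ℂ))⁻¹ ∂ρ)⁻¹ = (∫ t : ℝ, (z - (t : ℂ))⁻¹ ∂μ)⁻¹ - (x : ℂ))
    (y : ℝ) (hy : 0 < y) :
    ((y:ℂ)*I)^2 * (Hc ρ y - 1 - (((∫ t : ℝ, t ∂μ : ℝ) : ℂ) + x) * (((y:ℂ)*I)⁻¹))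
      = (Kc μ y + x*((∫ t : ℝ, t ∂μ : ℝ) : ℂ) + x*Kc μ y*(((y:ℂ)*I)⁻¹)
          + x*(((∫ t : ℝ, t ∂μ : ℝ) : ℂ) + x)*Hc μ y)
        * (1 - x*Hc μ y*(((y:ℂ)*I)⁻¹))⁻¹ := by
  set m : ℂ := ((∫ t : ℝ, t ∂μ : ℝ) : ℂ) with hm
  set w : ℂ := (y:ℂ)*I with hwdef
  set u : ℂ := Hc μ y with hu
  set k : ℂ := Kc μ y with hkdef
  have hwne : w ≠ 0 := w_ne y hy
  have hGμ := G_ne μ y hy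
  have hGρ := G_ne ρ y hy
  have hune : u ≠ 0 := mul_ne_zero hwne hGμ
  have hz : ((y:ℂ)*I).im = y := by simp
  have hrel : (Gc ρ y)⁻¹ = (Gc μ y)⁻¹ - (x:ℂ) := h ((y:ℂ)*I) (by rw [hz]; exact hy)
  have hGμ_eq : (Gc μ y)⁻¹ = w * u⁻¹ := by
    rw [hu, Hc, mul_inv, ← hwdef, ← mul_assoc, mul_inv_cancel₀ hwne, one_mul]
  have hrel2 : (Gc ρ y)⁻¹ = (w - x*u) * u⁻¹ := by
    rw [hrel, hGμ_eq]
    field_simp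
  have hNne : w - x*u ≠ 0 := by
    intro hN
    rw [hN, zero_mul] at hrel2
    exact inv_ne_zero hGρ hrel2
  have hGρ_eq : Gc ρ y = u * (w - x*u)⁻¹ := by
    rw [← inv_inv (Gc ρ y), hrel2]
    rw [mul_inv, inv_inv]
    ring
  have hHρ : Hc ρ y = w * u * (w - x*u)⁻¹ := by
    rw [Hc, hGρ_eq, ← hwdef]; ring
  have hk : k = w^2*(u-1) - w*m := by
    rw [hkdef, ← H_expand μ hμ2 y hy, ← hwdef, ← hu, ← hm]
    field_simp
  rw [hHρ, hk]
  have hN2 : w - u*(x:ℂ) ≠ 0 := by rw [mul_comm]; exact hNne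
  field_simp
  ring

lemma H_tendsto_one (μ : Measure ℝ) [IsProbabilityMeasure μ]
    (hμ2 : Integrable (fun t : ℝ => t ^ 2) μ) :
    Tendsto (fun y => Hc μ y) atTop (𝓝 1) := by
  have heq : ∀ᶠ y : ℝ in atTop, Hc μ y
      = 1 + ((∫ t : ℝ, t ∂μ : ℝ) : ℂ) * ((y:ℂ)*I)⁻¹ + Kc μ y * (((y:ℂ)*I)⁻¹)^2 := by
    filter_upwards [eventually_gt_atTop 0] with y hy
    have := H_expand μ hμ2 y hy
    have hwne := w_ne y hy
    have hy0 : (y:ℂ) ≠ 0 := by exact_mod_cast hy.ne'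
    field_simp at this ⊢
    linear_combination this
  have hlim : Tendsto (fun y : ℝ => 1 + ((∫ t : ℝ, t ∂μ : ℝ) : ℂ) * ((y:ℂ)*I)⁻¹
      + Kc μ y * (((y:ℂ)*I)⁻¹)^2) atTop (𝓝 1) := by
    have h1 := winv_tendsto.const_mul ((∫ t : ℝ, t ∂μ : ℝ) : ℂ)
    have h2 := (K_tendsto μ hμ2).mul (winv_tendsto.pow 2)
    have := (h1.const_add 1).add h2
    simpa using this
  exact Tendsto.congr' (heq.mono fun y hy => hy.symm) hlim

lemma E_tendsto (μ ρ : Measure ℝ) [IsProbabilityMeasure μ] [IsProbabilityMeasure ρ]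
    (hμ2 : Integrable (fun t : ℝ => t ^ 2) μ) (x : ℝ)
    (h : ∀ z : ℂ, 0 < z.im →
      (∫ t : ℝ, (z - (t : ℂ))⁻¹ ∂ρ)⁻¹ = (∫ t : ℝ, (z - (t : ℂ))⁻¹ ∂μ)⁻¹ - (x : ℂ)) :
    Tendsto (fun y : ℝ => ((y:ℂ)*I)^2 * (Hc ρ y - 1 - (((∫ t : ℝ, t ∂μ : ℝ) : ℂ) + x) * (((y:ℂ)*I)⁻¹)))
      atTop (𝓝 (((∫ t : ℝ, t^2 ∂μ : ℝ) : ℂ) + 2*x*((∫ t : ℝ, t ∂μ : ℝ) : ℂ) + x^2)) := by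
  set m : ℂ := ((∫ t : ℝ, t ∂μ : ℝ) : ℂ)
  set m2 : ℂ := ((∫ t : ℝ, t^2 ∂μ : ℝ) : ℂ)
  have heq : ∀ᶠ y : ℝ in atTop,
      (Kc μ y + x*m + x*Kc μ y*(((y:ℂ)*I)⁻¹) + x*(m + x)*Hc μ y)
        * (1 - x*Hc μ y*(((y:ℂ)*I)⁻¹))⁻¹
      = ((y:ℂ)*I)^2 * (Hc ρ y - 1 - (m + x) * (((y:ℂ)*I)⁻¹)) := by
    filter_upwards [eventually_gt_atTop 0] with y hy
    exact (E_formula μ ρ hμ2 x h y hy).symm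
  have hK := K_tendsto μ hμ2
  have hH := H_tendsto_one μ hμ2
  have hnum : Tendsto (fun y => Kc μ y + x*m + x*Kc μ y*(((y:ℂ)*I)⁻¹) + x*(m + x)*Hc μ y)
      atTop (𝓝 (m2 + x*m + x*(m+x))) := by
    have h3 := ((hK.const_mul (x:ℂ)).mul winv_tendsto)
    have h4 := hH.const_mul ((x:ℂ)*(m+x))
    have := ((hK.add_const ((x:ℂ)*m)).add h3).add h4
    simpa [mul_assoc] using this
  have hden : Tendsto (fun y => (1 - x*Hc μ y*(((y:ℂ)*I)⁻¹))⁻¹) atTop (𝓝 1) := by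
    have h5 : Tendsto (fun y => 1 - x*Hc μ y*(((y:ℂ)*I)⁻¹)) atTop (𝓝 1) := by
      have := ((hH.const_mul (x:ℂ)).mul winv_tendsto).const_sub 1
      simpa [mul_assoc] using this
    simpa using h5.inv₀ one_ne_zero
  have hfin := hnum.mul hden
  rw [mul_one] at hfin
  rw [show m2 + (x:ℂ)*m + (x:ℂ)*(m+(x:ℂ)) = m2 + 2*(x:ℂ)*m + (x:ℂ)^2 from by ring] at hfin
  exact Tendsto.congr' heq hfin

lemma int_bounded (ν : Measure ℝ) [IsProbabilityMeasure ν] (f : ℝ → ℝ) (C : ℝ)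
    (hf : Continuous f) (hC : ∀ t, |f t| ≤ C) : Integrable f ν :=
  ⟨hf.aestronglyMeasurable, HasFiniteIntegral.of_bounded (C := C) (Eventually.of_forall hC)⟩

lemma cont_quot (y : ℝ) (hy : 0 < y) (g : ℝ → ℝ) (hg : Continuous g) :
    Continuous (fun t : ℝ => g t / (t^2 + y^2)) :=
  hg.div (by continuity) (fun t => by positivity)

lemma re_H (ν : Measure ℝ) [IsProbabilityMeasure ν] (y : ℝ) (hy : 0 < y) :
    (Hc ν y).re = ∫ t : ℝ, y^2/(t^2+y^2) ∂ν := by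
  have e1 : Hc ν y = ∫ t : ℝ, ((y:ℂ)*I) * ((y:ℂ)*I - (t:ℂ))⁻¹ ∂ν :=
    (integral_const_mul _ _).symm
  rw [e1]
  have e2 := (integral_re (𝕜 := ℂ) ((int_aux ν y hy).const_mul ((y:ℂ)*I))).symm
  rw [show ((∫ t : ℝ, ((y:ℂ)*I) * ((y:ℂ)*I - (t:ℂ))⁻¹ ∂ν).re)
      = ∫ t : ℝ, (((y:ℂ)*I) * ((y:ℂ)*I - (t:ℂ))⁻¹).re ∂ν from by simpa using e2]
  refine integral_congr_ae (Eventually.of_forall fun t => ?_)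
  simp [Complex.mul_re, Complex.inv_re, Complex.inv_im, Complex.normSq_apply]
  ring

lemma im_H (ν : Measure ℝ) [IsProbabilityMeasure ν] (y : ℝ) (hy : 0 < y) :
    (Hc ν y).im = ∫ t : ℝ, -(t*y)/(t^2+y^2) ∂ν := by
  have e1 : Hc ν y = ∫ t : ℝ, ((y:ℂ)*I) * ((y:ℂ)*I - (t:ℂ))⁻¹ ∂ν :=
    (integral_const_mul _ _).symm
  rw [e1]
  have e2 := (integral_im (𝕜 := ℂ) ((int_aux ν y hy).const_mul ((y:ℂ)*I))).symm
  rw [show ((∫ t : ℝ, ((y:ℂ)*I) * ((y:ℂ)*I - (t:ℂ))⁻¹ ∂ν).im)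
      = ∫ t : ℝ, (((y:ℂ)*I) * ((y:ℂ)*I - (t:ℂ))⁻¹).im ∂ν from by simpa using e2]
  refine integral_congr_ae (Eventually.of_forall fun t => ?_)
  simp [Complex.mul_im, Complex.inv_re, Complex.inv_im, Complex.normSq_apply]
  ring

lemma A_eq (ν : Measure ℝ) [IsProbabilityMeasure ν] (y : ℝ) (hy : 0 < y) :
    y^2 * (1 - (Hc ν y).re) = ∫ t : ℝ, y^2*t^2/(t^2+y^2) ∂ν := by
  rw [re_H ν y hy]
  have i1 : Integrable (fun t : ℝ => y^2/(t^2+y^2)) ν := by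
    refine int_bounded ν _ 1 (cont_quot y hy _ continuous_const) fun t => ?_
    rw [_root_.abs_of_nonneg (by positivity), div_le_one (by positivity)]
    nlinarith [sq_nonneg t]
  have e1 : (1:ℝ) - ∫ t : ℝ, y^2/(t^2+y^2) ∂ν = ∫ t : ℝ, t^2/(t^2+y^2) ∂ν := by
    rw [show (1:ℝ) = ∫ _ : ℝ, (1:ℝ) ∂ν from by simp, ← integral_sub (integrable_const 1) i1]
    refine integral_congr_ae (Eventually.of_forall fun t => ?_)
    field_simp
    ring
  rw [e1, ← integral_const_mul]
  refine integral_congr_ae (Eventually.of_forall fun t => ?_)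
  ring

lemma B_eq (ν : Measure ℝ) [IsProbabilityMeasure ν] (y : ℝ) (hy : 0 < y) :
    -(y * (Hc ν y).im) = ∫ t : ℝ, y^2*t/(t^2+y^2) ∂ν := by
  rw [im_H ν y hy, ← integral_const_mul, ← integral_neg]
  refine integral_congr_ae (Eventually.of_forall fun t => ?_)
  ring

lemma A_tendsto (μ ρ : Measure ℝ) [IsProbabilityMeasure μ] [IsProbabilityMeasure ρ]
    (hμ2 : Integrable (fun t : ℝ => t ^ 2) μ) (x : ℝ)
    (h : ∀ z : ℂ, 0 < z.im →
      (∫ t : ℝ, (z - (t : ℂ))⁻¹ ∂ρ)⁻¹ = (∫ t : ℝ, (z - (t : ℂ))⁻¹ ∂μ)⁻¹ - (x : ℂ)) :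
    Tendsto (fun y : ℝ => ∫ t : ℝ, y^2*t^2/(t^2+y^2) ∂ρ) atTop
      (𝓝 ((∫ t : ℝ, t^2 ∂μ) + 2*x*(∫ t : ℝ, t ∂μ) + x^2)) := by
  have hE := E_tendsto μ ρ hμ2 x h
  have hRe := (Complex.continuous_re.tendsto _).comp hE
  have hval : (((∫ t : ℝ, t^2 ∂μ : ℝ) : ℂ) + 2*x*((∫ t : ℝ, t ∂μ : ℝ) : ℂ) + x^2).re
      = (∫ t : ℝ, t^2 ∂μ) + 2*x*(∫ t : ℝ, t ∂μ) + x^2 := by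
    norm_cast
  rw [hval] at hRe
  refine Tendsto.congr' ?_ hRe
  filter_upwards [eventually_gt_atTop 0] with y hy
  have hw := w_ne y hy
  set m : ℂ := ((∫ t : ℝ, t ∂μ : ℝ) : ℂ) with hm
  have hI : (I:ℂ)^2 = -1 := I_sq
  have hEy : ((y:ℂ)*I)^2 * (Hc ρ y - 1 - (m + x) * (((y:ℂ)*I)⁻¹))
      = ((-(y^2) : ℝ):ℂ) * (Hc ρ y - 1) + (m + x) * (-(y:ℂ)) * I := by
    have : ((y:ℂ)*I)^2 = ((-(y^2) : ℝ):ℂ) := by push_cast; rw [mul_pow, hI]; ring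
    have hy0 : (y:ℂ) ≠ 0 := by exact_mod_cast hy.ne'
    field_simp [this]
    push_cast
    linear_combination ((y:ℂ)^2*(Hc ρ y - 1)) * hI
  rw [Function.comp_apply, hEy]
  have hre : (((-(y^2) : ℝ):ℂ) * (Hc ρ y - 1) + (m + x) * (-(y:ℂ)) * I).re
      = y^2 * (1 - (Hc ρ y).re) := by
    simp [hm, Complex.add_re, Complex.mul_re, Complex.mul_im, Complex.sub_re, Complex.sub_im,
      Complex.ofReal_re, Complex.ofReal_im, ← Complex.ofReal_pow]
    ring
  rw [hre, A_eq ρ y hy]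

lemma B_tendsto (μ ρ : Measure ℝ) [IsProbabilityMeasure μ] [IsProbabilityMeasure ρ]
    (hμ2 : Integrable (fun t : ℝ => t ^ 2) μ) (x : ℝ)
    (h : ∀ z : ℂ, 0 < z.im →
      (∫ t : ℝ, (z - (t : ℂ))⁻¹ ∂ρ)⁻¹ = (∫ t : ℝ, (z - (t : ℂ))⁻¹ ∂μ)⁻¹ - (x : ℂ)) :
    Tendsto (fun y : ℝ => ∫ t : ℝ, y^2*t/(t^2+y^2) ∂ρ) atTop
      (𝓝 ((∫ t : ℝ, t ∂μ) + x)) := by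
  set m : ℂ := ((∫ t : ℝ, t ∂μ : ℝ) : ℂ) with hmdef
  have hE := E_tendsto μ ρ hμ2 x h
  have h1 : Tendsto (fun y : ℝ => ((y:ℂ)*I)^2 * (Hc ρ y - 1 - (m + x) * (((y:ℂ)*I)⁻¹))
      * (((y:ℂ)*I)⁻¹) + (m + x)) atTop (𝓝 (m + x)) := by
    have := (hE.mul winv_tendsto).add_const (m + x)
    simpa using this
  have h2 : Tendsto (fun y : ℝ => ((y:ℂ)*I) * (Hc ρ y - 1)) atTop (𝓝 (m + x)) := by
    refine Tendsto.congr' ?_ h1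
    filter_upwards [eventually_gt_atTop 0] with y hy
    have hw := w_ne y hy
    have hy0 : (y:ℂ) ≠ 0 := by exact_mod_cast hy.ne'
    field_simp
    ring
  have hRe := (Complex.continuous_re.tendsto _).comp h2
  have hval : (m + (x:ℂ)).re = (∫ t : ℝ, t ∂μ) + x := by
    rw [hmdef]; push_cast; simp
  rw [hval] at hRe
  refine Tendsto.congr' ?_ hRe
  filter_upwards [eventually_gt_atTop 0] with y hy
  have hre : (((y:ℂ)*I) * (Hc ρ y - 1)).re = -(y * (Hc ρ y).im) := by
    simp [Complex.mul_re, Complex.sub_im]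
  rw [Function.comp_apply, hre, B_eq ρ y hy]

lemma int_gn (ν : Measure ℝ) [IsProbabilityMeasure ν] (c : ℝ) (hc : 0 < c) :
    Integrable (fun t : ℝ => c^2*t^2/(t^2+c^2)) ν := by
  refine int_bounded ν _ (c^2) (cont_quot c hc _ (by continuity)) fun t => ?_
  rw [_root_.abs_of_nonneg (by positivity), div_le_iff₀ (by positivity)]
  nlinarith [sq_nonneg t, sq_nonneg (t*c)]

lemma sq_limit (t : ℝ) :
    Tendsto (fun n : ℕ => ((n:ℝ)+1)^2*t^2/(t^2+((n:ℝ)+1)^2)) atTop (𝓝 (t^2)) := by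
  have hd : Tendsto (fun n : ℕ => t^2+((n:ℝ)+1)^2) atTop atTop := by
    apply tendsto_atTop_add_const_left
    exact (tendsto_pow_atTop two_ne_zero).comp
      (tendsto_atTop_add_const_right _ _ tendsto_natCast_atTop_atTop)
  have h0 : Tendsto (fun n : ℕ => t^2 - t^4 * (t^2+((n:ℝ)+1)^2)⁻¹) atTop (𝓝 (t^2)) := by
    have := (hd.inv_tendsto_atTop.const_mul (t^4)).const_sub (t^2)
    simpa using this
  refine Tendsto.congr' (Eventually.of_forall fun n => ?_) h0
  have hpos : (0:ℝ) < t^2+((n:ℝ)+1)^2 := by positivity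
  field_simp
  ring

lemma sq_integrable_of_tendsto (ν : Measure ℝ) [IsProbabilityMeasure ν] (L : ℝ)
    (hL : Tendsto (fun y : ℝ => ∫ t : ℝ, y^2*t^2/(t^2+y^2) ∂ν) atTop (𝓝 L)) :
    Integrable (fun t : ℝ => t^2) ν := by
  set g : ℕ → ℝ → ℝ := fun n t => ((n:ℝ)+1)^2*t^2/(t^2+((n:ℝ)+1)^2) with hg
  have hcont : ∀ n : ℕ, Continuous (g n) := fun n =>
    cont_quot ((n:ℝ)+1) (by positivity) _ (by continuity)
  have hmono : ∀ t : ℝ, Monotone (fun n => g n t) := by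
    intro t n m hnm
    rcases eq_or_ne t 0 with rfl | ht
    · simp [hg]
    have h1 : (0:ℝ) < t^2+((n:ℝ)+1)^2 := by positivity
    have h2 : (0:ℝ) < t^2+((m:ℝ)+1)^2 := by positivity
    rw [hg]
    rw [div_le_div_iff₀ h1 h2]
    have : ((n:ℝ)+1) ≤ ((m:ℝ)+1) := by
      have : (n:ℝ) ≤ (m:ℝ) := Nat.cast_le.mpr hnm
      linarith
    have hsq : ((n:ℝ)+1)^2 ≤ ((m:ℝ)+1)^2 := by nlinarith
    nlinarith [mul_le_mul_of_nonneg_right hsq (by positivity : (0:ℝ) ≤ t^2*t^2)]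
  -- sequence of integrals tends to L and is monotone
  have hseq : Tendsto (fun n : ℕ => ∫ t : ℝ, g n t ∂ν) atTop (𝓝 L) := by
    have hy : Tendsto (fun n : ℕ => (n:ℝ)+1) atTop atTop :=
      tendsto_atTop_add_const_right _ _ tendsto_natCast_atTop_atTop
    exact hL.comp hy
  have hmonoI : Monotone (fun n : ℕ => ∫ t : ℝ, g n t ∂ν) := by
    intro n m hnm
    refine integral_mono (int_gn ν _ (by positivity)) (int_gn ν _ (by positivity)) ?_
    exact fun t => hmono t hnm
  have hbnd : ∀ n : ℕ, ∫ t : ℝ, g n t ∂ν ≤ L := hmonoI.ge_of_tendsto hseq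
  -- lintegral monotone convergence
  have hlim : Tendsto (fun n : ℕ => ∫⁻ t : ℝ, ENNReal.ofReal (g n t) ∂ν) atTop
      (𝓝 (∫⁻ t : ℝ, ENNReal.ofReal (t^2) ∂ν)) := by
    refine lintegral_tendsto_of_tendsto_of_monotone
      (fun n => ((hcont n).measurable.ennreal_ofReal).aemeasurable) ?_ ?_
    · exact Eventually.of_forall fun t n m hnm => ENNReal.ofReal_le_ofReal (hmono t hnm)
    · exact Eventually.of_forall fun t => (ENNReal.continuous_ofReal.tendsto _).comp (sq_limit t)
  have hfin : (∫⁻ t : ℝ, ENNReal.ofReal (t^2) ∂ν) ≤ ENNReal.ofReal L := by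
    refine le_of_tendsto hlim (Eventually.of_forall fun n => ?_)
    rw [← ofReal_integral_eq_lintegral_ofReal (int_gn ν _ (by positivity))
      (Eventually.of_forall fun t => by positivity)]
    exact ENNReal.ofReal_le_ofReal (hbnd n)
  refine ⟨(continuous_pow 2).aestronglyMeasurable, ?_⟩
  rw [hasFiniteIntegral_iff_ofReal (Eventually.of_forall fun t => by positivity)]
  exact lt_of_le_of_lt hfin ENNReal.ofReal_lt_top

lemma sq_limit_real (t : ℝ) :
    Tendsto (fun y : ℝ => y^2*t^2/(t^2+y^2)) atTop (𝓝 (t^2)) := by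
  have hd : Tendsto (fun y : ℝ => t^2+y^2) atTop atTop :=
    tendsto_atTop_add_const_left _ _ (tendsto_pow_atTop two_ne_zero)
  have h0 : Tendsto (fun y : ℝ => t^2 - t^4 * (t^2+y^2)⁻¹) atTop (𝓝 (t^2)) := by
    have := (hd.inv_tendsto_atTop.const_mul (t^4)).const_sub (t^2)
    simpa using this
  refine Tendsto.congr' ?_ h0
  filter_upwards [eventually_gt_atTop 0] with y hy
  have hpos : (0:ℝ) < t^2+y^2 := by positivity
  field_simp
  ring

lemma fst_limit_real (t : ℝ) :
    Tendsto (fun y : ℝ => y^2*t/(t^2+y^2)) atTop (𝓝 t) := by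
  have hd : Tendsto (fun y : ℝ => t^2+y^2) atTop atTop :=
    tendsto_atTop_add_const_left _ _ (tendsto_pow_atTop two_ne_zero)
  have h0 : Tendsto (fun y : ℝ => t - t^3 * (t^2+y^2)⁻¹) atTop (𝓝 t) := by
    have := (hd.inv_tendsto_atTop.const_mul (t^3)).const_sub t
    simpa using this
  refine Tendsto.congr' ?_ h0
  filter_upwards [eventually_gt_atTop 0] with y hy
  have hpos : (0:ℝ) < t^2+y^2 := by positivity
  field_simp
  ring

lemma A_dct (ν : Measure ℝ) [IsProbabilityMeasure ν]
    (h2 : Integrable (fun t : ℝ => t ^ 2) ν) :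
    Tendsto (fun y : ℝ => ∫ t : ℝ, y^2*t^2/(t^2+y^2) ∂ν) atTop (𝓝 (∫ t : ℝ, t^2 ∂ν)) := by
  refine tendsto_integral_filter_of_dominated_convergence (fun t => t^2) ?_ ?_ h2 ?_
  · filter_upwards [eventually_gt_atTop 0] with y hy
    exact (cont_quot y hy _ (by continuity)).aestronglyMeasurable
  · filter_upwards [eventually_gt_atTop 0] with y hy
    refine Eventually.of_forall fun t => ?_
    rw [Real.norm_eq_abs, _root_.abs_of_nonneg (by positivity)]
    rw [div_le_iff₀ (by positivity)]
    nlinarith [sq_nonneg (t*y), sq_nonneg t, sq_nonneg (t*t)]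
  · exact Eventually.of_forall sq_limit_real

lemma B_dct (ν : Measure ℝ) [IsProbabilityMeasure ν]
    (h2 : Integrable (fun t : ℝ => t ^ 2) ν) :
    Tendsto (fun y : ℝ => ∫ t : ℝ, y^2*t/(t^2+y^2) ∂ν) atTop (𝓝 (∫ t : ℝ, t ∂ν)) := by
  have h1 : Integrable (fun t : ℝ => |t|) ν := (int_id ν h2).abs
  refine tendsto_integral_filter_of_dominated_convergence (fun t => |t|) ?_ ?_ h1 ?_
  · filter_upwards [eventually_gt_atTop 0] with y hy
    exact (cont_quot y hy _ (by continuity)).aestronglyMeasurable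
  · filter_upwards [eventually_gt_atTop 0] with y hy
    refine Eventually.of_forall fun t => ?_
    rw [Real.norm_eq_abs, abs_div, _root_.abs_of_nonneg (by positivity : (0:ℝ) ≤ t^2+y^2)]
    rw [div_le_iff₀ (by positivity)]
    rw [abs_mul, _root_.abs_of_nonneg (by positivity : (0:ℝ) ≤ y^2)]
    nlinarith [abs_nonneg t, sq_nonneg t, _root_.sq_abs t]
  · exact Eventually.of_forall fst_limit_real

lemma var_formula (ν : Measure ℝ) [IsProbabilityMeasure ν]
    (h2 : Integrable (fun t : ℝ => t ^ 2) ν) :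
    variance id ν = (∫ t : ℝ, t^2 ∂ν) - (∫ t : ℝ, t ∂ν)^2 := by
  have hmem : MemLp (id : ℝ → ℝ) 2 ν := by
    rw [memLp_two_iff_integrable_sq aestronglyMeasurable_id]
    exact h2
  rw [variance_eq_sub hmem]
  congr 1

/-- If `μ` is a Borel probability measure on `ℝ` with finite second
moment and `ρ` is a Borel probability measure with `1/G_ρ = 1/G_μ - x` on the upper
half-plane (i.e. `ρ = δ_x ▷ μ`), then `ρ` has finite second moment,
`m(ρ) = m(μ) + x`, `var(ρ) = var(μ)`, and `m₂(ρ) = m₂(μ) + 2x·m(μ) + x²`. -/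
theorem moments_of_translated_F_transform
    (μ ρ : Measure ℝ) [IsProbabilityMeasure μ] [IsProbabilityMeasure ρ]
    (hμ2 : Integrable (fun t : ℝ => t ^ 2) μ) (x : ℝ)
    (h : ∀ z : ℂ, 0 < z.im →
      (∫ t : ℝ, (z - (t : ℂ))⁻¹ ∂ρ)⁻¹ = (∫ t : ℝ, (z - (t : ℂ))⁻¹ ∂μ)⁻¹ - (x : ℂ)) :
    Integrable (fun t : ℝ => t ^ 2) ρ ∧
    (∫ t : ℝ, t ∂ρ) = (∫ t : ℝ, t ∂μ) + x ∧
    variance id ρ = variance id μ ∧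
    (∫ t : ℝ, t ^ 2 ∂ρ) = (∫ t : ℝ, t ^ 2 ∂μ) + 2 * x * (∫ t : ℝ, t ∂μ) + x ^ 2 := by
  have hA := A_tendsto μ ρ hμ2 x h
  have hρ2 : Integrable (fun t : ℝ => t ^ 2) ρ := sq_integrable_of_tendsto ρ _ hA
  have hm2ρ : (∫ t : ℝ, t ^ 2 ∂ρ) = (∫ t : ℝ, t ^ 2 ∂μ) + 2*x*(∫ t : ℝ, t ∂μ) + x^2 :=
    tendsto_nhds_unique (A_dct ρ hρ2) hA
  have hmρ : (∫ t : ℝ, t ∂ρ) = (∫ t : ℝ, t ∂μ) + x :=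
    tendsto_nhds_unique (B_dct ρ hρ2) (B_tendsto μ ρ hμ2 x h)
  refine ⟨hρ2, hmρ, ?_, hm2ρ⟩
  rw [var_formula ρ hρ2, var_formula μ hμ2, hm2ρ, hmρ]
  ring
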